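/- Curvature of the Glauber dynamics (heat bath) for the Ising model: let G be a finite graph with maximal vertex degree v_max, let 𝒳 = {−1,1}^G with distance d(s,s') = ½ ∑_{x∈G} |s(x) − s'(x)|, let β ≥ 0, h ∈ ℝ, and define the energy U(s) = −∑_{x∼y} s(x)s(y) − h ∑_{x∈G} s(x). Consider the heat bath kernel: from state s, pick x ∈ G uniformly at random and set the spin at x to +1 with probability e^{−βU(s_{x+})}/(e^{−βU(s_{x+})} + e^{−βU(s_{x−})}) and to −1 with the complementary probability, where s_{x±} denotes s with the spin at x set to ±1. Then this chain has positive Ricci curvature κ ≥ (1/|G|)(1 − v_max · (e^β − e^{−β})/(e^β + e^{−β})); in particular W₁(P_s, P_{s'}) ≤ (1 − κ) d(s,s') with this value of κ, for all s, s' ∈ 𝒳. -/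

import Mathlib

open MeasureTheory ENNReal
open scoped NNReal

noncomputable section

variable {X : Type*} [MetricSpace X] [MeasurableSpace X]

/-- The L¹ Wasserstein distance between two measures on a metric space,
defined as the infimum of the transport cost over all couplings. -/
def W1 (μ ν : Measure X) : ℝ≥0∞ :=
  ⨅ (ξ : Measure (X × X)) (_ : ξ.map Prod.fst = μ) (_ : ξ.map Prod.snd = ν),
    ∫⁻ p, edist p.1 p.2 ∂ξ

/-- The Markov kernel `P` has (coarse) Ricci curvature at least `κ`:
`W₁(P_x, P_y) ≤ (1-κ) d(x,y)` for all `x, y`. -/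
def PosCurvature (P : X → Measure X) (κ : ℝ) : Prop :=
  ∀ x y : X, W1 (P x) (P y) ≤ ENNReal.ofReal ((1 - κ) * dist x y)

/-- `N`-step transition kernel: `stepN P 0 x = δ_x` and
`stepN P (N+1) x = ∫ P_z(dy) (stepN P N x)(dz)`. -/
def stepN (P : X → Measure X) : ℕ → X → Measure X
  | 0 => fun x => Measure.dirac x
  | n + 1 => fun x => (stepN P n x).bind P

/-- Iterated averaging operator `P^N f (x) = ∫ f d(P_x^N)`. -/
def avgN (P : X → Measure X) (n : ℕ) (f : X → ℝ) (x : X) : ℝ :=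
  ∫ y, f y ∂(stepN P n x)

/-- Law of the trajectory `(X_1, …, X_n)` of the Markov chain started at `x`. -/
def pathLaw (P : X → Measure X) : (n : ℕ) → X → Measure (Fin n → X)
  | 0 => fun _ => Measure.dirac (fun i : Fin 0 => i.elim0)
  | n + 1 => fun x => (P x).bind fun y => (pathLaw P n y).map (fun p => Fin.cons y p)

/-- Empirical mean `π̂(f) = (1/T) ∑_{k=T₀+1}^{T₀+T} f(X_k)`, as a function of the
trajectory `(X_1, …, X_{T₀+T})`. -/
def empMean (f : X → ℝ) (T₀ T : ℕ) (p : Fin (T₀ + T) → X) : ℝ :=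
  (1 / (T : ℝ)) * ∑ i : Fin (T₀ + T), if T₀ ≤ (i : ℕ) then f (p i) else 0

/-- Expectation `E_x π̂(f)` of the empirical mean for the chain started at `x`. -/
def empExp (P : X → Measure X) (f : X → ℝ) (T₀ T : ℕ) (x : X) : ℝ :=
  ∫ p, empMean f T₀ T p ∂(pathLaw P (T₀ + T) x)

/-- Variance `Var_x π̂(f)` of the empirical mean for the chain started at `x`. -/
def empVar (P : X → Measure X) (f : X → ℝ) (T₀ T : ℕ) (x : X) : ℝ :=
  ∫ p, (empMean f T₀ T p - empExp P f T₀ T x) ^ 2 ∂(pathLaw P (T₀ + T) x)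

/-- Lipschitz seminorm `‖f‖_Lip = sup_{x ≠ y} |f(x) - f(y)|/d(x,y)`, as the least
Lipschitz constant of `f`. -/
def lipNorm (f : X → ℝ) : ℝ :=
  sInf {K : ℝ | ∀ x y : X, |f x - f y| ≤ K * dist x y}

/-- Coarse diffusion constant `σ(x)² = ½ ∬ d(y,z)² P_x(dy) P_x(dz)`. -/
def diffSq (P : X → Measure X) (x : X) : ℝ :=
  (1 / 2) * ∫ y, ∫ z, dist y z ^ 2 ∂(P x) ∂(P x)

/-- Local dimension `n_x`. -/
def localDim (P : X → Measure X) (x : X) : ℝ :=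
  sInf {r : ℝ | ∃ f : X → ℝ, (∃ K : ℝ≥0, LipschitzWith K f) ∧
    (∫ y, ∫ z, |f y - f z| ^ 2 ∂(P x) ∂(P x)) ≠ 0 ∧
    r = (∫ y, ∫ z, dist y z ^ 2 ∂(P x) ∂(P x)) /
        (∫ y, ∫ z, |f y - f z| ^ 2 ∂(P x) ∂(P x))}

/-- Support of a measure: the set of points all of whose open neighborhoods have
positive measure. -/
def msupp (μ : Measure X) : Set X :=
  {x : X | ∀ U : Set X, IsOpen U → x ∈ U → μ U ≠ 0}

/-- Granularity `σ_∞ = ½ sup_x diam (supp P_x)`, valued in `ℝ≥0∞`. -/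
def granularity (P : X → Measure X) : ℝ≥0∞ :=
  (1 / 2) * ⨆ x : X, EMetric.diam (msupp (P x))

/-- Eccentricity `E(x) = ∫ d(x,y) π(dy)`. -/
def ecc (π : Measure X) (x : X) : ℝ := ∫ y, dist x y ∂π


/-- Spin configurations on the vertex set `V`: an element of `{−1,1}^V`, encoded as
`V → Bool` with the Hamming distance (which equals `½ ∑_x |s(x) − s'(x)|` for
`±1`-valued spins). -/
abbrev SpinConf (V : Type*) [Fintype V] := Hamming (fun _ : V => Bool)

instance (V : Type*) [Fintype V] : MeasurableSpace (SpinConf V) := ⊤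

/-- The `±1` spin value at a site. -/
def spin {V : Type*} [Fintype V] (s : SpinConf V) (x : V) : ℝ :=
  if Hamming.ofHamming s x then 1 else -1

/-- The configuration `s` with the spin at `x` set to `+1` (if `b = true`) or `−1`. -/
def setSpin {V : Type*} [Fintype V] [DecidableEq V] (s : SpinConf V) (x : V) (b : Bool) :
    SpinConf V :=
  Hamming.toHamming (Function.update (Hamming.ofHamming s) x b)

/-- Ising energy `U(s) = −∑_{x∼y} s(x)s(y) − h ∑_x s(x)` (each edge counted once). -/
def isingEnergy {V : Type*} [Fintype V] (G : SimpleGraph V) [DecidableRel G.Adj]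
    (h : ℝ) (s : SpinConf V) : ℝ :=
  -(1 / 2) * (∑ x : V, ∑ y : V, if G.Adj x y then spin s x * spin s y else 0)
    - h * ∑ x : V, spin s x

/-- Glauber dynamics (heat bath) for the Ising model: pick a uniform random site `x` and
resample its spin according to the local Gibbs equilibrium. -/
def glauberKernel {V : Type*} [Fintype V] [DecidableEq V] (G : SimpleGraph V)
    [DecidableRel G.Adj] (β h : ℝ) : SpinConf V → Measure (SpinConf V) := fun s =>
  ((Fintype.card V : ℝ≥0∞))⁻¹ •
    ∑ x : V,
      (ENNReal.ofReal (Real.exp (-β * isingEnergy G h (setSpin s x true)) /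
          (Real.exp (-β * isingEnergy G h (setSpin s x true))
            + Real.exp (-β * isingEnergy G h (setSpin s x false)))) •
            Measure.dirac (setSpin s x true)
        + ENNReal.ofReal (Real.exp (-β * isingEnergy G h (setSpin s x false)) /
            (Real.exp (-β * isingEnergy G h (setSpin s x true))
              + Real.exp (-β * isingEnergy G h (setSpin s x false)))) •
              Measure.dirac (setSpin s x false))


set_option linter.unusedVariables false
set_option linter.unusedSectionVars false

namespace GlauberAux
open Real

instance (V : Type*) [Fintype V] : MeasurableSingletonClass (SpinConf V) :=
  ⟨fun _ => MeasurableSpace.measurableSet_top⟩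

def lgs (z : ℝ) : ℝ := (1 + Real.exp (-z))⁻¹

lemma lgs_mono : Monotone lgs := by
  intro a b hab
  unfold lgs
  have h := Real.exp_le_exp.2 (neg_le_neg hab)
  have h1 : (0:ℝ) < 1 + Real.exp (-b) := by positivity
  gcongr

lemma tanh_nonneg {β : ℝ} (hβ : 0 ≤ β) :
    0 ≤ (Real.exp β - Real.exp (-β)) / (Real.exp β + Real.exp (-β)) := by
  apply div_nonneg _ (by positivity)
  have := Real.exp_le_exp.2 (neg_le_self hβ)
  linarith

lemma lgs_step {β : ℝ} (hβ : 0 ≤ β) (z : ℝ) :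
    lgs (z + 4*β) - lgs z ≤ (Real.exp β - Real.exp (-β)) / (Real.exp β + Real.exp (-β)) := by
  have hE : 1 ≤ Real.exp (2*β) := Real.one_le_exp (by linarith)
  have hEpos : 0 < Real.exp (2*β) := Real.exp_pos _
  have hu : 0 < Real.exp (-z) := Real.exp_pos _
  set E := Real.exp (2*β) with hEdef
  set u := Real.exp (-z) with hudef
  have hE2 : E^2 = Real.exp (4*β) := by
    rw [sq, hEdef, ← Real.exp_add]; ring_nf
  have h1 : Real.exp (-(z + 4*β)) = u / E^2 := by
    rw [hE2, hudef, ← Real.exp_sub]; ring_nf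
  have htanh : (Real.exp β - Real.exp (-β)) / (Real.exp β + Real.exp (-β)) = (E - 1)/(E+1) := by
    rw [div_eq_div_iff (by positivity) (by positivity)]
    have e1 : E = Real.exp β * Real.exp β := by rw [hEdef, ← Real.exp_add]; ring_nf
    have e2 : Real.exp β * Real.exp (-β) = 1 := by rw [← Real.exp_add]; simp
    nlinarith [e1, e2, Real.exp_pos β, Real.exp_pos (-β)]
  unfold lgs
  rw [h1, htanh]
  have d1 : 0 < 1 + u / E^2 := by positivity
  have d2 : 0 < 1 + u := by positivity
  rw [inv_eq_one_div, inv_eq_one_div, div_sub_div _ _ (ne_of_gt d1) (ne_of_gt d2),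
    div_le_div_iff₀ (by positivity) (by positivity)]
  have key : 0 ≤ (E - 1) * (E - u)^2 := by nlinarith
  have hE2pos : (0:ℝ) < E^2 := by positivity
  field_simp
  nlinarith [key]


lemma lgs_steps {β : ℝ} (hβ : 0 ≤ β) (n : ℕ) (z : ℝ) :
    lgs (z + 4*β*n) - lgs z ≤ n * ((Real.exp β - Real.exp (-β)) / (Real.exp β + Real.exp (-β))) := by
  induction n with
  | zero => simp
  | succ n ih =>
    have h : z + 4*β*((n:ℝ)+1) = (z + 4*β*n) + 4*β := by ring
    push_cast
    rw [h]
    have h2 := lgs_step hβ (z + 4*β*n)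
    push_cast at ih
    linarith

lemma lgs_int {β : ℝ} (hβ : 0 ≤ β) (m : ℤ) (z : ℝ) :
    |lgs (z + 4*β*m) - lgs z|
      ≤ |(m:ℝ)| * ((Real.exp β - Real.exp (-β)) / (Real.exp β + Real.exp (-β))) := by
  rcases le_or_gt 0 m with hm | hm
  · obtain ⟨n, rfl⟩ := Int.eq_ofNat_of_zero_le hm
    have hzz : z ≤ z + 4*β*(n:ℝ) := by
      nlinarith [Nat.cast_nonneg (α := ℝ) n]
    rw [abs_of_nonneg (sub_nonneg.2 (lgs_mono (by push_cast; exact hzz)))]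
    rw [abs_of_nonneg (by positivity)]
    push_cast
    exact lgs_steps hβ n z
  · set w := z + 4*β*(m:ℝ) with hw
    have hn : (((-m).toNat : ℤ) : ℝ) = -(m:ℝ) := by
      rw [Int.toNat_of_nonneg (by omega)]; push_cast; ring
    push_cast at hn
    have hz : z = w + 4*β*(((-m).toNat : ℕ) : ℝ) := by rw [hw, hn]; ring
    have hm' : (m:ℝ) ≤ 0 := by exact_mod_cast hm.le
    have hwz : w ≤ z := by
      have : 4*β*(m:ℝ) ≤ 0 := mul_nonpos_of_nonneg_of_nonpos (by linarith) hm'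
      rw [hw]; linarith
    rw [abs_sub_comm, abs_of_nonneg (sub_nonneg.2 (lgs_mono hwz)), abs_of_nonpos hm']
    have h3 := lgs_steps hβ (-m).toNat w
    rw [hn] at h3 hz
    rw [hz]
    linarith


variable {V : Type*} [Fintype V] [DecidableEq V]
variable (G : SimpleGraph V) [DecidableRel G.Adj]

lemma hammingDist_update_eq (f g : V → Bool) (x : V) (b : Bool) :
    hammingDist (Function.update f x b) (Function.update g x b)
      = ((Finset.univ.filter fun y => f y ≠ g y).erase x).card := by
  unfold hammingDist
  congr 1
  ext y
  rcases eq_or_ne y x with rfl | hy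
  · simp
  · simp [Function.update_of_ne hy, hy]

lemma hammingDist_update_ne (f g : V → Bool) (x : V) (b b' : Bool) (hbb : b ≠ b') :
    hammingDist (Function.update f x b) (Function.update g x b')
      = ((Finset.univ.filter fun y => f y ≠ g y).erase x).card + 1 := by
  unfold hammingDist
  rw [← Finset.card_insert_of_notMem (Finset.notMem_erase x _)]
  congr 1
  ext y
  rcases eq_or_ne y x with rfl | hy
  · simp [hbb]
  · simp [Function.update_of_ne hy, hy]


lemma ofHamming_setSpin (s : SpinConf V) (x : V) (b : Bool) :
    Hamming.ofHamming (setSpin s x b) = Function.update (Hamming.ofHamming s) x b := by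
  simp [setSpin]

lemma spin_setSpin_ne (s : SpinConf V) (x : V) (b : Bool) {y : V} (hyx : y ≠ x) :
    spin (setSpin s x b) y = spin s y := by
  simp [spin, ofHamming_setSpin, Function.update_of_ne hyx]

lemma spin_setSpin_same (s : SpinConf V) (x : V) (b : Bool) :
    spin (setSpin s x b) x = if b then 1 else -1 := by
  simp [spin, ofHamming_setSpin]

/-- local magnetization -/
def mgn (s : SpinConf V) (x : V) : ℝ := ∑ y ∈ G.neighborFinset x, spin s y

lemma sum_spin_diff (s : SpinConf V) (x : V) :
    ∑ y : V, spin (setSpin s x true) y - ∑ y : V, spin (setSpin s x false) y = 2 := by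
  rw [← Finset.sum_sub_distrib]
  rw [Finset.sum_eq_single_of_mem x (Finset.mem_univ x)]
  · rw [spin_setSpin_same, spin_setSpin_same]; norm_num
  · intro y _ hy
    rw [spin_setSpin_ne _ _ _ hy, spin_setSpin_ne _ _ _ hy]; ring

lemma row_sum (s : SpinConf V) (x : V) :
    ∑ y : V, (if G.Adj x y then spin (setSpin s x true) x * spin (setSpin s x true) y else 0)
      - ∑ y : V, (if G.Adj x y then spin (setSpin s x false) x * spin (setSpin s x false) y else 0)
      = 2 * mgn G s x := by
  rw [← Finset.sum_sub_distrib]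
  have key : ∀ y ∈ Finset.univ (α := V),
      ((if G.Adj x y then spin (setSpin s x true) x * spin (setSpin s x true) y else 0)
        - (if G.Adj x y then spin (setSpin s x false) x * spin (setSpin s x false) y else 0))
      = (if G.Adj x y then 2 * spin s y else 0) := by
    intro y _
    rcases eq_or_ne y x with rfl | hy
    · simp [G.irrefl]
    · split_ifs with hadj
      · rw [spin_setSpin_same, spin_setSpin_same, spin_setSpin_ne _ _ _ hy,
          spin_setSpin_ne _ _ _ hy]
        norm_num
        ring
      · ring
  rw [Finset.sum_congr rfl key, mgn, SimpleGraph.neighborFinset_eq_filter,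
    Finset.sum_filter, Finset.mul_sum]
  exact Finset.sum_congr rfl fun y _ => by split_ifs <;> ring

lemma col_sum (s : SpinConf V) (x : V) :
    ∑ x' : V, (if G.Adj x' x then spin (setSpin s x true) x' * spin (setSpin s x true) x else 0)
      - ∑ x' : V, (if G.Adj x' x then spin (setSpin s x false) x' * spin (setSpin s x false) x else 0)
      = 2 * mgn G s x := by
  rw [← Finset.sum_sub_distrib]
  have key : ∀ x' ∈ Finset.univ (α := V),
      ((if G.Adj x' x then spin (setSpin s x true) x' * spin (setSpin s x true) x else 0)
        - (if G.Adj x' x then spin (setSpin s x false) x' * spin (setSpin s x false) x else 0))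
      = (if G.Adj x x' then 2 * spin s x' else 0) := by
    intro x' _
    rcases eq_or_ne x' x with rfl | hx'
    · simp [G.irrefl]
    · by_cases hadj : G.Adj x' x
      · rw [if_pos hadj, if_pos hadj, if_pos ((G.adj_comm x x').mpr hadj),
          spin_setSpin_same, spin_setSpin_same, spin_setSpin_ne _ _ _ hx',
          spin_setSpin_ne _ _ _ hx']
        norm_num
        ring
      · rw [if_neg hadj, if_neg hadj, if_neg (fun hc => hadj ((G.adj_comm x x').mp hc))]
        ring
  rw [Finset.sum_congr rfl key, mgn, SimpleGraph.neighborFinset_eq_filter,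
    Finset.sum_filter, Finset.mul_sum]
  exact Finset.sum_congr rfl fun y _ => by split_ifs <;> ring

lemma double_sum_diff (s : SpinConf V) (x : V) :
    (∑ x' : V, ∑ y : V, if G.Adj x' y then spin (setSpin s x true) x' * spin (setSpin s x true) y else 0)
      - (∑ x' : V, ∑ y : V, if G.Adj x' y then spin (setSpin s x false) x' * spin (setSpin s x false) y else 0)
      = 4 * mgn G s x := by
  rw [← Finset.sum_sub_distrib]
  have split : ∀ x' ∈ Finset.univ (α := V),
      ((∑ y : V, if G.Adj x' y then spin (setSpin s x true) x' * spin (setSpin s x true) y else 0)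
        - (∑ y : V, if G.Adj x' y then spin (setSpin s x false) x' * spin (setSpin s x false) y else 0))
      = (if x' = x then 2 * mgn G s x else
          ((if G.Adj x' x then spin (setSpin s x true) x' * spin (setSpin s x true) x else 0)
            - (if G.Adj x' x then spin (setSpin s x false) x' * spin (setSpin s x false) x else 0))) := by
    intro x' _
    rcases eq_or_ne x' x with rfl | hx'
    · rw [if_pos rfl]
      exact row_sum G s x'
    · rw [if_neg hx']
      rw [← Finset.sum_sub_distrib]
      rw [Finset.sum_eq_single_of_mem x (Finset.mem_univ x)]
      intro y _ hy
      rcases eq_or_ne y x' with rfl | hyx'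
      · simp [G.irrefl]
      · split_ifs with hadj
        · rw [spin_setSpin_ne _ _ _ hy, spin_setSpin_ne _ _ _ hy,
            spin_setSpin_ne _ _ _ hx', spin_setSpin_ne _ _ _ hx']
          ring
        · ring
  rw [Finset.sum_congr rfl split]
  rw [← Finset.add_sum_erase _ _ (Finset.mem_univ x), if_pos rfl]
  have herase : ∀ x' ∈ Finset.univ.erase x,
      (if x' = x then 2 * mgn G s x else
          ((if G.Adj x' x then spin (setSpin s x true) x' * spin (setSpin s x true) x else 0)
            - (if G.Adj x' x then spin (setSpin s x false) x' * spin (setSpin s x false) x else 0)))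
      = ((if G.Adj x' x then spin (setSpin s x true) x' * spin (setSpin s x true) x else 0)
            - (if G.Adj x' x then spin (setSpin s x false) x' * spin (setSpin s x false) x else 0)) := by
    intro x' hx'
    rw [if_neg (Finset.mem_erase.mp hx').1]
  rw [Finset.sum_congr rfl herase]
  rw [Finset.sum_erase _ (by simp [G.irrefl])]
  rw [Finset.sum_sub_distrib, col_sum G s x]
  ring

lemma energy_diff (h : ℝ) (s : SpinConf V) (x : V) :
    isingEnergy G h (setSpin s x false) - isingEnergy G h (setSpin s x true)
      = 2 * (mgn G s x + h) := by
  unfold isingEnergy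
  have h1 := double_sum_diff G s x
  have h2 := sum_spin_diff s x
  linear_combination (1/2) * h1 + h * h2


variable (β h : ℝ)

/-- probability of setting spin to `+1` at site `x` -/
def pP (s : SpinConf V) (x : V) : ℝ :=
  Real.exp (-β * isingEnergy G h (setSpin s x true)) /
    (Real.exp (-β * isingEnergy G h (setSpin s x true))
      + Real.exp (-β * isingEnergy G h (setSpin s x false)))

/-- probability of setting spin to `-1` at site `x` -/
def pM (s : SpinConf V) (x : V) : ℝ :=
  Real.exp (-β * isingEnergy G h (setSpin s x false)) /
    (Real.exp (-β * isingEnergy G h (setSpin s x true))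
      + Real.exp (-β * isingEnergy G h (setSpin s x false)))

lemma pP_nonneg (s : SpinConf V) (x : V) : 0 ≤ pP G β h s x := by
  unfold pP; positivity

lemma pM_nonneg (s : SpinConf V) (x : V) : 0 ≤ pM G β h s x := by
  unfold pM; positivity

lemma pM_eq_one_sub (s : SpinConf V) (x : V) : pM G β h s x = 1 - pP G β h s x := by
  unfold pP pM
  have h1 : (0:ℝ) < Real.exp (-β * isingEnergy G h (setSpin s x true))
      + Real.exp (-β * isingEnergy G h (setSpin s x false)) := by positivity
  field_simp
  ring

lemma pP_le_one (s : SpinConf V) (x : V) : pP G β h s x ≤ 1 := by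
  have := pM_nonneg G β h s x
  rw [pM_eq_one_sub] at this
  linarith

lemma pP_eq_lgs (s : SpinConf V) (x : V) :
    pP G β h s x = lgs (2 * β * (mgn G s x + h)) := by
  unfold pP lgs
  have hEt : (0:ℝ) < Real.exp (-β * isingEnergy G h (setSpin s x true)) := Real.exp_pos _
  have hEf : (0:ℝ) < Real.exp (-β * isingEnergy G h (setSpin s x false)) := Real.exp_pos _
  have hx : Real.exp (-(2 * β * (mgn G s x + h)))
      = Real.exp (-β * isingEnergy G h (setSpin s x false))
        / Real.exp (-β * isingEnergy G h (setSpin s x true)) := by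
    rw [← Real.exp_sub]
    congr 1
    have hd := energy_diff G h s x
    linear_combination β * hd
  rw [hx]
  rw [eq_comm, inv_eq_one_div]
  rw [div_eq_div_iff (by positivity) (by positivity)]
  field_simp

/-- the contraction coefficient `tanh β` -/
def tanhc : ℝ := (Real.exp β - Real.exp (-β)) / (Real.exp β + Real.exp (-β))

/-- per-site bound on the difference of update probabilities -/
lemma p_site_bound (hβ : 0 ≤ β) (s s' : SpinConf V) (x : V) :
    |pP G β h s x - pP G β h s' x|
      ≤ (((G.neighborFinset x).filter
            (fun y => Hamming.ofHamming s y ≠ Hamming.ofHamming s' y)).card : ℝ)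
          * tanhc β := by
  classical
  set δ : V → ℤ := fun y => if Hamming.ofHamming s y = Hamming.ofHamming s' y then 0
    else (if Hamming.ofHamming s y then 1 else -1) with hδ
  have hspin : ∀ y, spin s y - spin s' y = 2 * ((δ y : ℤ) : ℝ) := by
    intro y
    simp only [hδ, spin]
    rcases hb : Hamming.ofHamming s y <;> rcases hb' : Hamming.ofHamming s' y <;>
      simp [hb, hb'] <;> norm_num
  set c : ℤ := ∑ y ∈ G.neighborFinset x, δ y with hc
  have hmgn : mgn G s x - mgn G s' x = 2 * (c : ℝ) := by
    rw [hc, mgn, mgn, ← Finset.sum_sub_distrib]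
    push_cast
    rw [Finset.mul_sum]
    exact Finset.sum_congr rfl fun y _ => hspin y
  have harg : 2 * β * (mgn G s x + h) = 2 * β * (mgn G s' x + h) + 4 * β * (c : ℝ) := by
    linear_combination 2 * β * hmgn
  rw [pP_eq_lgs, pP_eq_lgs, harg]
  have hint := lgs_int hβ c (2 * β * (mgn G s' x + h))
  refine le_trans hint ?_
  have hT : 0 ≤ tanhc β := tanh_nonneg hβ
  unfold tanhc
  apply mul_le_mul_of_nonneg_right _ (tanh_nonneg hβ)
  -- |(c:ℝ)| ≤ card
  have habs : |c| ≤ (((G.neighborFinset x).filter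
      (fun y => Hamming.ofHamming s y ≠ Hamming.ofHamming s' y)).card : ℤ) := by
    refine le_trans (Finset.abs_sum_le_sum_abs _ _) ?_
    have : ∀ y ∈ G.neighborFinset x, |δ y| =
        (if Hamming.ofHamming s y ≠ Hamming.ofHamming s' y then (1:ℤ) else 0) := by
      intro y _
      simp only [hδ]
      split_ifs <;> simp_all
    rw [Finset.sum_congr rfl this, Finset.sum_boole]
  exact_mod_cast habs

open MeasureTheory in
lemma map_finset_sum {α γ : Type*} [MeasurableSpace α] [MeasurableSpace γ] {f : α → γ}
    (hf : Measurable f) {ι : Type*} (t : Finset ι) (μ : ι → Measure α) :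
    (∑ i ∈ t, μ i).map f = ∑ i ∈ t, (μ i).map f := by
  classical
  induction t using Finset.induction with
  | empty => simp
  | insert _ _ hnot ih =>
    rw [Finset.sum_insert hnot, Finset.sum_insert hnot, Measure.map_add _ _ hf, ih]

open MeasureTheory in
lemma four_map {M N : Type*} [MeasurableSpace M] [MeasurableSpace N]
    (c1 c2 c3 c4 : ℝ≥0∞) (x1 x2 x3 x4 : M) {f : M → N} (hf : Measurable f) :
    (c1 • Measure.dirac x1 + c2 • Measure.dirac x2 + c3 • Measure.dirac x3
      + c4 • Measure.dirac x4).map f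
    = c1 • Measure.dirac (f x1) + c2 • Measure.dirac (f x2) + c3 • Measure.dirac (f x3)
      + c4 • Measure.dirac (f x4) := by
  rw [Measure.map_add _ _ hf, Measure.map_add _ _ hf, Measure.map_add _ _ hf,
    Measure.map_smul, Measure.map_smul, Measure.map_smul, Measure.map_smul,
    Measure.map_dirac' hf, Measure.map_dirac' hf, Measure.map_dirac' hf, Measure.map_dirac' hf]

open MeasureTheory in
lemma four_lintegral {M : Type*} [MeasurableSpace M] [MeasurableSingletonClass M]
    (c1 c2 c3 c4 : ℝ≥0∞) (x1 x2 x3 x4 : M) (f : M → ℝ≥0∞) :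
    ∫⁻ y, f y ∂(c1 • Measure.dirac x1 + c2 • Measure.dirac x2 + c3 • Measure.dirac x3
      + c4 • Measure.dirac x4)
    = c1 * f x1 + c2 * f x2 + c3 * f x3 + c4 * f x4 := by
  rw [lintegral_add_measure, lintegral_add_measure, lintegral_add_measure,
    lintegral_smul_measure, lintegral_smul_measure, lintegral_smul_measure,
    lintegral_smul_measure, lintegral_dirac, lintegral_dirac, lintegral_dirac, lintegral_dirac]
  simp only [smul_eq_mul]

open MeasureTheory in
lemma four_combine_fst {M : Type*} [MeasurableSpace M] (p q : ℝ)
    (hp0 : 0 ≤ p) (hp1 : p ≤ 1) (hq0 : 0 ≤ q) (hq1 : q ≤ 1) (μT μF : Measure M) :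
    ENNReal.ofReal (min p q) • μT + ENNReal.ofReal (min (1-p) (1-q)) • μF
      + ENNReal.ofReal (p - min p q) • μT + ENNReal.ofReal (q - min p q) • μF
    = ENNReal.ofReal p • μT + ENNReal.ofReal (1-p) • μF := by
  ext A hA
  simp only [Measure.add_apply, Measure.smul_apply, smul_eq_mul]
  rcases le_total p q with hpq | hpq
  · rw [min_eq_left hpq, min_eq_right (by linarith : 1 - q ≤ 1 - p)]
    have h4 : ENNReal.ofReal (1 - q) + ENNReal.ofReal (q - p) = ENNReal.ofReal (1-p) := by
      rw [← ENNReal.ofReal_add (by linarith) (by linarith)]; congr 1; ring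
    rw [show p - p = 0 by ring, ENNReal.ofReal_zero, ← h4]
    ring
  · rw [min_eq_right hpq, min_eq_left (by linarith : 1 - p ≤ 1 - q)]
    have h4 : ENNReal.ofReal q + ENNReal.ofReal (p - q) = ENNReal.ofReal p := by
      rw [← ENNReal.ofReal_add (by linarith) (by linarith)]; congr 1; ring
    rw [show q - q = 0 by ring, ENNReal.ofReal_zero, ← h4]
    ring

open MeasureTheory in
lemma four_combine_snd {M : Type*} [MeasurableSpace M] (p q : ℝ)
    (hp0 : 0 ≤ p) (hp1 : p ≤ 1) (hq0 : 0 ≤ q) (hq1 : q ≤ 1) (μT μF : Measure M) :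
    ENNReal.ofReal (min p q) • μT + ENNReal.ofReal (min (1-p) (1-q)) • μF
      + ENNReal.ofReal (p - min p q) • μF + ENNReal.ofReal (q - min p q) • μT
    = ENNReal.ofReal q • μT + ENNReal.ofReal (1-q) • μF := by
  ext A hA
  simp only [Measure.add_apply, Measure.smul_apply, smul_eq_mul]
  rcases le_total p q with hpq | hpq
  · rw [min_eq_left hpq, min_eq_right (by linarith : 1 - q ≤ 1 - p)]
    have h4 : ENNReal.ofReal p + ENNReal.ofReal (q - p) = ENNReal.ofReal q := by
      rw [← ENNReal.ofReal_add (by linarith) (by linarith)]; congr 1; ring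
    rw [show p - p = 0 by ring, ENNReal.ofReal_zero, ← h4]
    ring
  · rw [min_eq_right hpq, min_eq_left (by linarith : 1 - p ≤ 1 - q)]
    have h4 : ENNReal.ofReal (1 - p) + ENNReal.ofReal (p - q) = ENNReal.ofReal (1-q) := by
      rw [← ENNReal.ofReal_add (by linarith) (by linarith)]; congr 1; ring
    rw [show q - q = 0 by ring, ENNReal.ofReal_zero, ← h4]
    ring

lemma count_sum (s s' : SpinConf V) :
    ∑ x : V, ((G.neighborFinset x).filter
        (fun y => Hamming.ofHamming s y ≠ Hamming.ofHamming s' y)).card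
      ≤ (Finset.univ.filter
          (fun y => Hamming.ofHamming s y ≠ Hamming.ofHamming s' y)).card * G.maxDegree := by
  have h1 : ∀ x : V, ((G.neighborFinset x).filter
      (fun y => Hamming.ofHamming s y ≠ Hamming.ofHamming s' y)).card
      = ∑ y : V, if Hamming.ofHamming s y ≠ Hamming.ofHamming s' y ∧ G.Adj x y then 1 else 0 := by
    intro x
    rw [Finset.card_filter, SimpleGraph.neighborFinset_eq_filter, Finset.sum_filter]
    refine Finset.sum_congr rfl fun y _ => ?_
    split_ifs <;> tauto
  calc ∑ x : V, ((G.neighborFinset x).filter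
        (fun y => Hamming.ofHamming s y ≠ Hamming.ofHamming s' y)).card
      = ∑ x : V, ∑ y : V,
          if Hamming.ofHamming s y ≠ Hamming.ofHamming s' y ∧ G.Adj x y then 1 else 0 :=
        Finset.sum_congr rfl fun x _ => h1 x
    _ = ∑ y : V, ∑ x : V,
          if Hamming.ofHamming s y ≠ Hamming.ofHamming s' y ∧ G.Adj x y then 1 else 0 :=
        Finset.sum_comm
    _ = ∑ y : V, if Hamming.ofHamming s y ≠ Hamming.ofHamming s' y
          then G.degree y else 0 := by
        refine Finset.sum_congr rfl fun y _ => ?_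
        by_cases h2 : Hamming.ofHamming s y ≠ Hamming.ofHamming s' y
        · rw [if_pos h2, ← SimpleGraph.card_neighborFinset_eq_degree,
            SimpleGraph.neighborFinset_eq_filter, Finset.card_filter]
          refine Finset.sum_congr rfl fun x _ => ?_
          by_cases h3 : G.Adj x y
          · rw [if_pos ⟨h2, h3⟩, if_pos h3.symm]
          · rw [if_neg (fun hc => h3 hc.2), if_neg (fun hc => h3 hc.symm)]
        · rw [if_neg h2]
          refine Finset.sum_eq_zero fun x _ => ?_
          rw [if_neg (fun hc => h2 hc.1)]
    _ ≤ ∑ y : V, if Hamming.ofHamming s y ≠ Hamming.ofHamming s' y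
          then G.maxDegree else 0 := by
        refine Finset.sum_le_sum fun y _ => ?_
        split_ifs
        · exact G.degree_le_maxDegree y
        · exact le_refl 0
    _ = (Finset.univ.filter
          (fun y => Hamming.ofHamming s y ≠ Hamming.ofHamming s' y)).card * G.maxDegree := by
        rw [← Finset.sum_filter, Finset.sum_const, smul_eq_mul]

lemma dist_setSpin_eqb (s s' : SpinConf V) (x : V) (b : Bool) :
    dist (setSpin s x b) (setSpin s' x b)
      = ((((Finset.univ.filter
          fun y => Hamming.ofHamming s y ≠ Hamming.ofHamming s' y)).erase x).card : ℝ) := by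
  rw [Hamming.dist_eq_hammingDist, ofHamming_setSpin, ofHamming_setSpin, hammingDist_update_eq]

lemma dist_setSpin_neb (s s' : SpinConf V) (x : V) {b b' : Bool} (hbb : b ≠ b') :
    dist (setSpin s x b) (setSpin s' x b')
      = ((((Finset.univ.filter
          fun y => Hamming.ofHamming s y ≠ Hamming.ofHamming s' y)).erase x).card : ℝ) + 1 := by
  rw [Hamming.dist_eq_hammingDist, ofHamming_setSpin, ofHamming_setSpin,
    hammingDist_update_ne _ _ _ _ _ hbb]
  push_cast
  ring

lemma dist_eq_cardD (s s' : SpinConf V) :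
    dist s s' = ((Finset.univ.filter
        fun y => Hamming.ofHamming s y ≠ Hamming.ofHamming s' y).card : ℝ) := by
  rw [Hamming.dist_eq_hammingDist]
  rfl

end GlauberAux

/-- **Curvature of the Glauber dynamics for the Ising model** (Section 2.2 of
Joulin–Ollivier): the heat bath chain has Ricci curvature at least
`(1/|G|)(1 − v_max (e^β − e^{−β})/(e^β + e^{−β}))`; in particular
`W₁(P_s, P_{s'}) ≤ (1 − κ) d(s,s')` with this value of `κ`. -/
theorem glauber_ising_curvature
    {V : Type*} [Fintype V] [DecidableEq V] [Nonempty V]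
    (G : SimpleGraph V) [DecidableRel G.Adj] (β h : ℝ) (hβ : 0 ≤ β) :
    ∀ s s' : SpinConf V,
      W1 (glauberKernel G β h s) (glauberKernel G β h s')
        ≤ ENNReal.ofReal
            ((1 - (1 / (Fintype.card V : ℝ)) *
                (1 - (G.maxDegree : ℝ) *
                  ((Real.exp β - Real.exp (-β)) / (Real.exp β + Real.exp (-β))))) *
              dist s s') := by
  classical
  intro s s'
  set D : Finset V :=
    Finset.univ.filter (fun y => Hamming.ofHamming s y ≠ Hamming.ofHamming s' y) with hD
  set k : ℕ := D.card with hk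
  set n : ℕ := Fintype.card V with hn
  have hn0 : 0 < (n : ℝ) := by
    rw [hn]; exact_mod_cast Fintype.card_pos
  set T : ℝ := (Real.exp β - Real.exp (-β)) / (Real.exp β + Real.exp (-β)) with hT
  have hT0 : 0 ≤ T := GlauberAux.tanh_nonneg hβ
  set p : V → ℝ := fun x => GlauberAux.pP G β h s x with hp
  set q : V → ℝ := fun x => GlauberAux.pP G β h s' x with hq
  have hp0 : ∀ x, 0 ≤ p x := fun x => GlauberAux.pP_nonneg G β h s x
  have hq0 : ∀ x, 0 ≤ q x := fun x => GlauberAux.pP_nonneg G β h s' x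
  have hp1 : ∀ x, p x ≤ 1 := fun x => GlauberAux.pP_le_one G β h s x
  have hq1 : ∀ x, q x ≤ 1 := fun x => GlauberAux.pP_le_one G β h s' x
  -- the coupling
  set ξ : Measure (SpinConf V × SpinConf V) :=
    ((n : ℝ≥0∞))⁻¹ • ∑ x : V,
      (ENNReal.ofReal (min (p x) (q x)) • Measure.dirac (setSpin s x true, setSpin s' x true)
        + ENNReal.ofReal (min (1 - p x) (1 - q x)) •
            Measure.dirac (setSpin s x false, setSpin s' x false)
        + ENNReal.ofReal (p x - min (p x) (q x)) •
            Measure.dirac (setSpin s x true, setSpin s' x false)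
        + ENNReal.ofReal (q x - min (p x) (q x)) •
            Measure.dirac (setSpin s x false, setSpin s' x true)) with hξ
  -- first marginal
  have hfst : ξ.map Prod.fst = glauberKernel G β h s := by
    rw [hξ, Measure.map_smul, GlauberAux.map_finset_sum measurable_fst]
    unfold glauberKernel
    rw [hn]
    congr 1
    refine Finset.sum_congr rfl fun x _ => ?_
    rw [GlauberAux.four_map _ _ _ _ _ _ _ _ measurable_fst,
      GlauberAux.four_combine_fst (p x) (q x) (hp0 x) (hp1 x) (hq0 x) (hq1 x),
      ← GlauberAux.pM_eq_one_sub]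
    rfl
  -- second marginal
  have hsnd : ξ.map Prod.snd = glauberKernel G β h s' := by
    rw [hξ, Measure.map_smul, GlauberAux.map_finset_sum measurable_snd]
    unfold glauberKernel
    rw [hn]
    congr 1
    refine Finset.sum_congr rfl fun x _ => ?_
    rw [GlauberAux.four_map _ _ _ _ _ _ _ _ measurable_snd,
      GlauberAux.four_combine_snd (p x) (q x) (hp0 x) (hp1 x) (hq0 x) (hq1 x),
      ← GlauberAux.pM_eq_one_sub]
    rfl
  -- distance data
  set E : V → ℝ := fun x => ((D.erase x).card : ℝ) with hE
  have hE0 : ∀ x, 0 ≤ E x := fun x => Nat.cast_nonneg _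
  -- the transport cost of the coupling
  set I : V → ℝ := fun x =>
    min (p x) (q x) * E x + min (1 - p x) (1 - q x) * E x
      + (p x - min (p x) (q x)) * (E x + 1) + (q x - min (p x) (q x)) * (E x + 1) with hI
  have hIval : ∀ x, I x = E x + |p x - q x| := by
    intro x
    simp only [hI]
    rcases le_total (p x) (q x) with hpq | hpq
    · rw [min_eq_left hpq, min_eq_right (by linarith : 1 - q x ≤ 1 - p x),
        abs_of_nonpos (by linarith : p x - q x ≤ 0)]
      ring
    · rw [min_eq_right hpq, min_eq_left (by linarith : 1 - p x ≤ 1 - q x),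
        abs_of_nonneg (by linarith : 0 ≤ p x - q x)]
      ring
  have hI0 : ∀ x, 0 ≤ I x := by
    intro x
    rw [hIval x]
    have := abs_nonneg (p x - q x)
    have := hE0 x
    linarith
  have hcost : ∫⁻ pt, edist pt.1 pt.2 ∂ξ = ((n : ℝ≥0∞))⁻¹ * ENNReal.ofReal (∑ x : V, I x) := by
    rw [hξ, lintegral_smul_measure, lintegral_finset_sum_measure]
    congr 1
    rw [ENNReal.ofReal_sum_of_nonneg (fun x _ => hI0 x)]
    refine Finset.sum_congr rfl fun x _ => ?_
    rw [GlauberAux.four_lintegral]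
    have e1 : edist (setSpin s x true, setSpin s' x true).1 (setSpin s x true, setSpin s' x true).2
        = ENNReal.ofReal (E x) := by
      rw [edist_dist]
      congr 1
      exact GlauberAux.dist_setSpin_eqb s s' x true
    have e2 : edist (setSpin s x false, setSpin s' x false).1
          (setSpin s x false, setSpin s' x false).2
        = ENNReal.ofReal (E x) := by
      rw [edist_dist]
      congr 1
      exact GlauberAux.dist_setSpin_eqb s s' x false
    have e3 : edist (setSpin s x true, setSpin s' x false).1
          (setSpin s x true, setSpin s' x false).2
        = ENNReal.ofReal (E x + 1) := by
      rw [edist_dist]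
      congr 1
      exact GlauberAux.dist_setSpin_neb s s' x (by simp)
    have e4 : edist (setSpin s x false, setSpin s' x true).1
          (setSpin s x false, setSpin s' x true).2
        = ENNReal.ofReal (E x + 1) := by
      rw [edist_dist]
      congr 1
      exact GlauberAux.dist_setSpin_neb s s' x (by simp)
    rw [e1, e2, e3, e4]
    have m1 : (0:ℝ) ≤ min (p x) (q x) := le_min (hp0 x) (hq0 x)
    have m2 : (0:ℝ) ≤ min (1 - p x) (1 - q x) :=
      le_min (by linarith [hp1 x]) (by linarith [hq1 x])
    have m3 : (0:ℝ) ≤ p x - min (p x) (q x) := by simp [sub_nonneg, min_le_left]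
    have m4 : (0:ℝ) ≤ q x - min (p x) (q x) := by simp [sub_nonneg, min_le_right]
    have g1 : (0:ℝ) ≤ min (p x) (q x) * E x := mul_nonneg m1 (hE0 x)
    have g2 : (0:ℝ) ≤ min (1 - p x) (1 - q x) * E x := mul_nonneg m2 (hE0 x)
    have g3 : (0:ℝ) ≤ (p x - min (p x) (q x)) * (E x + 1) :=
      mul_nonneg m3 (by linarith [hE0 x])
    have g4 : (0:ℝ) ≤ (q x - min (p x) (q x)) * (E x + 1) :=
      mul_nonneg m4 (by linarith [hE0 x])
    rw [← ENNReal.ofReal_mul m1, ← ENNReal.ofReal_mul m2, ← ENNReal.ofReal_mul m3,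
      ← ENNReal.ofReal_mul m4, ← ENNReal.ofReal_add g1 g2,
      ← ENNReal.ofReal_add (by linarith : (0:ℝ) ≤ min (p x) (q x) * E x
        + min (1 - p x) (1 - q x) * E x) g3,
      ← ENNReal.ofReal_add (by linarith : (0:ℝ) ≤ min (p x) (q x) * E x
        + min (1 - p x) (1 - q x) * E x + (p x - min (p x) (q x)) * (E x + 1)) g4]
  -- the real-valued estimate
  have hEsum : ∑ x : V, E x = (n : ℝ) * k - k := by
    have hptw : ∀ x : V, E x = (k : ℝ) - (if x ∈ D then 1 else 0) := by
      intro x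
      by_cases hx : x ∈ D
      · simp only [hE]
        rw [Finset.card_erase_of_mem hx, if_pos hx, hk]
        have hk1 : 1 ≤ D.card := Finset.card_pos.mpr ⟨x, hx⟩
        push_cast [Nat.cast_sub hk1]
        ring
      · simp only [hE]
        rw [Finset.erase_eq_of_notMem hx, if_neg hx, hk]
        ring
    rw [Finset.sum_congr rfl (fun x _ => hptw x), Finset.sum_sub_distrib, Finset.sum_const,
      Finset.card_univ, ← hn]
    have : ∑ x : V, (if x ∈ D then (1:ℝ) else 0) = (k : ℝ) := by
      rw [Finset.sum_ite_mem, Finset.univ_inter, Finset.sum_const, hk]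
      simp
    rw [this]
    push_cast
    ring
  have habs : ∑ x : V, |p x - q x| ≤ (k : ℝ) * (G.maxDegree : ℝ) * T := by
    have h1 : ∀ x : V, |p x - q x| ≤
        (((G.neighborFinset x).filter
          (fun y => Hamming.ofHamming s y ≠ Hamming.ofHamming s' y)).card : ℝ) * T :=
      fun x => GlauberAux.p_site_bound G β h hβ s s' x
    refine le_trans (Finset.sum_le_sum fun x _ => h1 x) ?_
    rw [← Finset.sum_mul]
    have h2 : (∑ x : V, (((G.neighborFinset x).filter
          (fun y => Hamming.ofHamming s y ≠ Hamming.ofHamming s' y)).card : ℝ))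
        ≤ (k : ℝ) * (G.maxDegree : ℝ) := by
      have := GlauberAux.count_sum G s s'
      rw [hk, hD]
      push_cast
      exact_mod_cast this
    nlinarith [h2, hT0, Finset.sum_nonneg (fun x (_ : x ∈ Finset.univ) =>
      Nat.cast_nonneg (α := ℝ) (((G.neighborFinset x).filter
        (fun y => Hamming.ofHamming s y ≠ Hamming.ofHamming s' y)).card))]
  have hdist : dist s s' = (k : ℝ) := by
    rw [GlauberAux.dist_eq_cardD s s', ← hD, ← hk]
  have hS : ∑ x : V, I x ≤ (n : ℝ) *
      ((1 - (1 / (n : ℝ)) * (1 - (G.maxDegree : ℝ) * T)) * (k : ℝ)) := by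
    have hrhs : (n : ℝ) * ((1 - (1 / (n : ℝ)) * (1 - (G.maxDegree : ℝ) * T)) * (k : ℝ))
        = (n : ℝ) * k - k + (k : ℝ) * (G.maxDegree : ℝ) * T := by
      field_simp
      ring
    rw [hrhs, Finset.sum_congr rfl (fun x _ => hIval x), Finset.sum_add_distrib, hEsum]
    linarith [habs]
  -- put it together
  have hint : ∫⁻ pt, edist pt.1 pt.2 ∂ξ ≤ ENNReal.ofReal
      ((1 - (1 / (Fintype.card V : ℝ)) *
        (1 - (G.maxDegree : ℝ) * ((Real.exp β - Real.exp (-β)) / (Real.exp β + Real.exp (-β))))) *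
        dist s s') := by
    rw [hcost, hdist, ← hn, ← hT]
    calc ((n : ℝ≥0∞))⁻¹ * ENNReal.ofReal (∑ x : V, I x)
        ≤ ((n : ℝ≥0∞))⁻¹ * ENNReal.ofReal ((n : ℝ) *
            ((1 - (1 / (n : ℝ)) * (1 - (G.maxDegree : ℝ) * T)) * (k : ℝ))) :=
          mul_le_mul_right (ENNReal.ofReal_le_ofReal hS) _
      _ = ((n : ℝ≥0∞))⁻¹ * ((n : ℝ≥0∞) * ENNReal.ofReal
            ((1 - (1 / (n : ℝ)) * (1 - (G.maxDegree : ℝ) * T)) * (k : ℝ))) := by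
          rw [ENNReal.ofReal_mul hn0.le, ENNReal.ofReal_natCast]
      _ = ENNReal.ofReal ((1 - (1 / (n : ℝ)) * (1 - (G.maxDegree : ℝ) * T)) * (k : ℝ)) := by
          rw [← mul_assoc, ENNReal.inv_mul_cancel (by exact_mod_cast hn0.ne')
            (ENNReal.natCast_ne_top n), one_mul]
  refine le_trans ?_ hint
  unfold W1
  exact iInf_le_of_le ξ (iInf_le_of_le hfst (iInf_le_of_le hsnd le_rfl))

end
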